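/- Under the hypotheses of the federated Gram-Schmidt equivalence (v : Fin k → EuclideanSpace ℝ N linearly independent, ũ_i^s satisfying the federated recursion with aggregated residuals, ñ_i := Σ_t ⟨ũ_i^t, ũ_i^t⟩), the family w : Fin k → EuclideanSpace ℝ N defined blockwise by w_i^s = (1/√ñ_i) • ũ_i^s is an orthonormal family of vectors. -/

import Mathlib

open scoped RealInnerProductSpace

/-- The local block `u^s = u ∘ Sigma.mk s` of a vertically partitioned vector `u` at site `s`. -/
def localBlock {S : ℕ} {n : Fin S → ℕ}
    (u : EuclideanSpace ℝ ((s : Fin S) × Fin (n s))) (s : Fin S) :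
    EuclideanSpace ℝ (Fin (n s)) :=
  WithLp.toLp 2 (fun j => u (Sigma.mk s j))

theorem inner_eq_sum_localBlock {S : ℕ} {n : Fin S → ℕ}
    (x y : EuclideanSpace ℝ ((s : Fin S) × Fin (n s))) :
    ⟪x, y⟫ = ∑ s : Fin S, ⟪localBlock x s, localBlock y s⟫ := by
  simp only [PiLp.inner_apply, RCLike.inner_apply, conj_trivial, localBlock, PiLp.toLp_apply]
  rw [← Finset.univ_sigma_univ, Finset.sum_sigma]

/-- Correctness of the output of federated Gram-Schmidt (Algorithm 3): if the local families
`ũ i s` satisfy the federated recursion with aggregated residuals, and the family `w` is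
defined blockwise by `w_i^s = (1/√ñ_i) • ũ_i^s` with aggregated squared norms
`ñ_i = Σ_t ⟪ũ_i^t, ũ_i^t⟫`, then `w` is an orthonormal family of vectors. -/
theorem federated_gramSchmidt_output_orthonormal (S k : ℕ) (n : Fin S → ℕ)
    (v : Fin k → EuclideanSpace ℝ ((s : Fin S) × Fin (n s)))
    (hv : LinearIndependent ℝ v)
    (u : Fin k → (s : Fin S) → EuclideanSpace ℝ (Fin (n s)))
    (hrec : ∀ (i : Fin k) (s : Fin S), u i s =
      localBlock (v i) s -
        ∑ j ∈ Finset.Iio i,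
          ((∑ t : Fin S, ⟪u j t, localBlock (v i) t⟫) /
            (∑ t : Fin S, ⟪u j t, u j t⟫)) • u j s)
    (w : Fin k → EuclideanSpace ℝ ((s : Fin S) × Fin (n s)))
    (hw : ∀ (i : Fin k) (s : Fin S),
      localBlock (w i) s = (1 / Real.sqrt (∑ t : Fin S, ⟪u i t, u i t⟫)) • u i s) :
    Orthonormal ℝ w := by
  classical
  haveI : WellFoundedLT (Fin k) := inferInstance
  set U : Fin k → EuclideanSpace ℝ ((s : Fin S) × Fin (n s)) :=
    fun i => WithLp.toLp 2 (fun p => u i p.1 p.2) with hU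
  have hUblock : ∀ (i : Fin k) (s : Fin S), localBlock (U i) s = u i s := fun i s => rfl
  have hUinner : ∀ (j : Fin k) (y : EuclideanSpace ℝ ((s : Fin S) × Fin (n s))),
      (∑ t : Fin S, ⟪u j t, localBlock y t⟫) = ⟪U j, y⟫ := by
    intro j y
    rw [inner_eq_sum_localBlock]
    exact Finset.sum_congr rfl fun t _ => by rw [hUblock]
  have hUU : ∀ j : Fin k, (∑ t : Fin S, ⟪u j t, u j t⟫) = ⟪U j, U j⟫ := by
    intro j
    rw [← hUinner j (U j)]
    exact Finset.sum_congr rfl fun t _ => by rw [hUblock]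
  -- The assembled vectors satisfy the global Gram-Schmidt recursion
  have key : ∀ i : Fin k, U i = InnerProductSpace.gramSchmidt ℝ v i := by
    have H : ∀ m : ℕ, ∀ i : Fin k, (i : ℕ) = m → U i = InnerProductSpace.gramSchmidt ℝ v i := by
      intro m
      induction m using Nat.strong_induction_on with
      | _ m ihm =>
        intro i him
        have ih : ∀ j : Fin k, j < i → U j = InnerProductSpace.gramSchmidt ℝ v j := by
          intro j hj
          exact ihm j (him ▸ hj) j rfl
        rw [InnerProductSpace.gramSchmidt_def]
        have hproj : ∀ j ∈ Finset.Iio i,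
            (ℝ ∙ InnerProductSpace.gramSchmidt ℝ v j).starProjection (v i) =
              ((∑ t : Fin S, ⟪u j t, localBlock (v i) t⟫) /
                (∑ t : Fin S, ⟪u j t, u j t⟫)) • U j := by
          intro j hj
          rw [Submodule.starProjection_singleton, ← ih j (Finset.mem_Iio.mp hj),
            hUinner j (v i), hUU j, real_inner_self_eq_norm_sq]
          norm_cast
        rw [Finset.sum_congr rfl hproj]
        ext p
        have h := congrArg (fun x => x p.2) (hrec i p.1)
        show u i p.1 p.2 = _
        rw [h]
        simp only [PiLp.sub_apply, PiLp.smul_apply, smul_eq_mul, Finset.sum_apply, localBlock]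
        refine congrArg₂ (· - ·) rfl ?_
        rw [WithLp.ofLp_sum, WithLp.ofLp_sum, Finset.sum_apply, Finset.sum_apply]
        exact Finset.sum_congr rfl fun x _ => rfl
    exact fun i => H i i rfl
  have hwU : w = InnerProductSpace.gramSchmidtNormed ℝ v := by
    funext i
    ext p
    have h1 : w i p = localBlock (w i) p.1 p.2 := rfl
    have hnorm : Real.sqrt (∑ t : Fin S, ⟪u i t, u i t⟫) = ‖InnerProductSpace.gramSchmidt ℝ v i‖ := by
      rw [hUU i, key i, real_inner_self_eq_norm_sq, Real.sqrt_sq (norm_nonneg _)]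
    have h2 : u i p.1 p.2 = InnerProductSpace.gramSchmidt ℝ v i p := by rw [← key i]
    rw [h1, hw i p.1]
    simp only [InnerProductSpace.gramSchmidtNormed, PiLp.smul_apply, smul_eq_mul, hnorm, one_div,
      RCLike.ofReal_real_eq_id, id]
    rw [h2]
  rw [hwU]
  exact InnerProductSpace.gramSchmidtNormed_orthonormal hv
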